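/- Let S be a semigroup of partial isometries on a complex Hilbert space H. Then for all S, T in S, the initial projection S*S commutes with the final projection T T*; that is, P(S) is contained in the commutant of Q(S) and Q(S) is contained in the commutant of P(S). -/

import Mathlib

open scoped InnerProductSpace

/-- If `‖u‖ ≤ ‖u + c • v‖` for all scalars `c`, then `u ⊥ v`. -/
lemma inner_eq_zero_of_norm_le {H : Type*} [NormedAddCommGroup H] [InnerProductSpace ℂ H]
    (u v : H) (h : ∀ c : ℂ, ‖u‖ ≤ ‖u + c • v‖) : ⟪v, u⟫_ℂ = 0 := by
  by_cases hv : v = 0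
  · simp [hv]
  have hvpos : (0 : ℝ) < ‖v‖ := norm_pos_iff.mpr hv
  have hv2 : (0 : ℝ) < ‖v‖ ^ 2 := by positivity
  set c : ℂ := -(⟪v, u⟫_ℂ / (‖v‖ ^ 2 : ℝ)) with hc
  have h1 : ‖u‖ ^ 2 ≤ ‖u + c • v‖ ^ 2 := by
    have := h c
    nlinarith [norm_nonneg u, norm_nonneg (u + c • v)]
  have hexp : ‖u + c • v‖ ^ 2 = ‖u‖ ^ 2 - ‖⟪v, u⟫_ℂ‖ ^ 2 / ‖v‖ ^ 2 := by
    have hsq : ‖u + c • v‖ ^ 2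
        = ‖u‖ ^ 2 + 2 * (Complex.re ⟪u, c • v⟫_ℂ) + ‖c • v‖ ^ 2 := by
      simpa only [pow_two, RCLike.re_to_complex] using norm_add_sq (𝕜 := ℂ) u (c • v)
    have hvne : (‖v‖ : ℂ) ≠ 0 := by
      simpa using fun h => hv (norm_eq_zero.mp h)
    have hinner : ⟪u, c • v⟫_ℂ = -(‖⟪v, u⟫_ℂ‖ ^ 2 / ‖v‖ ^ 2 : ℝ) := by
      rw [inner_smul_right, hc]
      rw [show ⟪u, v⟫_ℂ = starRingEnd ℂ ⟪v, u⟫_ℂ from (inner_conj_symm u v).symm]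
      have hm : ⟪v, u⟫_ℂ * starRingEnd ℂ ⟪v, u⟫_ℂ = ((‖⟪v, u⟫_ℂ‖ : ℂ)) ^ 2 := by
        rw [Complex.mul_conj, Complex.normSq_eq_norm_sq]
        push_cast; rfl
      have hm2 : ⟪v, u⟫_ℂ * ⟪u, v⟫_ℂ = ((‖⟪v, u⟫_ℂ‖ : ℂ)) ^ 2 := by
        rw [← inner_conj_symm u v]; exact hm
      push_cast
      field_simp
      linear_combination -hm
    have hcnorm : ‖c • v‖ ^ 2 = ‖⟪v, u⟫_ℂ‖ ^ 2 / ‖v‖ ^ 2 := by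
      rw [norm_smul, hc]
      have : ‖(-(⟪v, u⟫_ℂ / ((‖v‖ : ℂ) ^ 2)))‖ = ‖⟪v, u⟫_ℂ‖ / ‖v‖ ^ 2 := by
        rw [norm_neg, norm_div]
        norm_num
      push_cast at this ⊢
      rw [this]
      have hvpos : (0:ℝ) < ‖v‖ := norm_pos_iff.mpr hv
      field_simp
    rw [hsq, hinner, hcnorm]
    simp only [Complex.neg_re, Complex.ofReal_re]
    ring
  rw [hexp] at h1
  have : ‖⟪v, u⟫_ℂ‖ ^ 2 / ‖v‖ ^ 2 ≤ 0 := by linarith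
  have hnn : (0:ℝ) ≤ ‖⟪v, u⟫_ℂ‖ ^ 2 / ‖v‖ ^ 2 := by positivity
  have : ‖⟪v, u⟫_ℂ‖ ^ 2 / ‖v‖ ^ 2 = 0 := le_antisymm this hnn
  have : ‖⟪v, u⟫_ℂ‖ = 0 := by
    by_contra h0
    have : (0:ℝ) < ‖⟪v, u⟫_ℂ‖ ^ 2 / ‖v‖ ^ 2 := by positivity
    linarith
  simpa using this

/-- An idempotent contraction on a Hilbert space is self-adjoint. -/
lemma isSelfAdjoint_of_idem_contraction {H : Type*} [NormedAddCommGroup H]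
    [InnerProductSpace ℂ H] [CompleteSpace H] (T : H →L[ℂ] H)
    (hidem : T * T = T) (hnorm : ‖T‖ ≤ 1) : IsSelfAdjoint T := by
  have hT2 : ∀ x, T (T x) = T x := fun x => by
    have := congrArg (fun S : H →L[ℂ] H => S x) hidem
    simpa using this
  -- range ⊥ ker : if T v = 0 then ⟪v, T x⟫ = 0
  have hortho : ∀ x v : H, T v = 0 → ⟪v, T x⟫_ℂ = 0 := by
    intro x v hv
    apply inner_eq_zero_of_norm_le
    intro c
    have hTx : T (T x + c • v) = T x := by
      rw [map_add, map_smul, hv, hT2, smul_zero, add_zero]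
    calc ‖T x‖ = ‖T (T x + c • v)‖ := by rw [hTx]
      _ ≤ ‖T‖ * ‖T x + c • v‖ := T.le_opNorm _
      _ ≤ 1 * ‖T x + c • v‖ := by
          exact mul_le_mul_of_nonneg_right hnorm (norm_nonneg _)
      _ = ‖T x + c • v‖ := one_mul _
  rw [ContinuousLinearMap.isSelfAdjoint_iff_isSymmetric]
  intro x y
  have h1 : ⟪T x, y⟫_ℂ = ⟪T x, T y⟫_ℂ := by
    have hker : T (y - T y) = 0 := by rw [map_sub, hT2, sub_self]
    have := hortho x (y - T y) hker
    have h2 : ⟪T x, y - T y⟫_ℂ = 0 := inner_eq_zero_symm.mpr this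
    have := inner_sub_right (𝕜 := ℂ) (T x) y (T y)
    rw [h2] at this
    linear_combination -this
  have h2 : ⟪x, T y⟫_ℂ = ⟪T x, T y⟫_ℂ := by
    have hker : T (x - T x) = 0 := by rw [map_sub, hT2, sub_self]
    have h3 := hortho y (x - T x) hker
    have := inner_sub_left (𝕜 := ℂ) x (T x) (T y)
    rw [h3] at this
    linear_combination -this
  simp only [ContinuousLinearMap.coe_coe]
  rw [h1, h2]

/-- A self-adjoint idempotent has norm at most one. -/
lemma norm_le_one_of_selfAdjoint_idem {H : Type*} [NormedAddCommGroup H]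
    [InnerProductSpace ℂ H] [CompleteSpace H] (P : H →L[ℂ] H)
    (hsa : star P = P) (hidem : P * P = P) : ‖P‖ ≤ 1 := by
  by_cases h0 : ‖P‖ = 0
  · rw [h0]; norm_num
  have h1 : ‖P‖ ^ 2 = ‖P‖ := by
    calc ‖P‖ ^ 2 = ‖star P * P‖ := by
          rw [CStarRing.norm_star_mul_self]; ring
      _ = ‖P‖ := by rw [hsa, hidem]
  nlinarith [norm_nonneg P]

/-- If `𝒮` is a semigroup of partial isometries on a complex Hilbert space, then
every initial projection `star A * A` (`A ∈ 𝒮`) commutes with every final projection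
`B * star B` (`B ∈ 𝒮`); i.e. `P(𝒮) ⊆ Q(𝒮)'` and `Q(𝒮) ⊆ P(𝒮)'`. -/
theorem initial_commutes_final {H : Type*} [NormedAddCommGroup H] [InnerProductSpace ℂ H]
    [CompleteSpace H] (𝒮 : Set (H →L[ℂ] H))
    (hmul : ∀ A ∈ 𝒮, ∀ B ∈ 𝒮, A * B ∈ 𝒮)
    (hpi : ∀ A ∈ 𝒮, A * star A * A = A) :
    ∀ A ∈ 𝒮, ∀ B ∈ 𝒮,
      (star A * A) * (B * star B) = (B * star B) * (star A * A) := by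
  intro A hA B hB
  set P : H →L[ℂ] H := star A * A with hP
  set Q : H →L[ℂ] H := B * star B with hQ
  have hPsa : star P = P := by simp [hP, mul_assoc]
  have hQsa : star Q = Q := by simp [hQ, mul_assoc]
  have hPidem : P * P = P := by
    have := hpi A hA
    calc P * P = star A * (A * star A * A) := by simp [hP]; noncomm_ring
      _ = P := by rw [this]
  have hQidem : Q * Q = Q := by
    have := hpi B hB
    calc Q * Q = (B * star B * B) * star B := by simp [hQ]; noncomm_ring
      _ = Q := by rw [this, hQ]
  -- A * B is a partial isometry, hence P * Q is idempotent
  have hABpi := hpi (A * B) (hmul A hA B hB)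
  have hidem : (P * Q) * (P * Q) = P * Q := by
    have : star A * ((A * B) * star (A * B) * (A * B)) * star B
        = star A * (A * B) * star B := by rw [hABpi]
    calc (P * Q) * (P * Q)
        = star A * ((A * B) * star (A * B) * (A * B)) * star B := by
          simp only [hP, hQ, star_mul]; noncomm_ring
      _ = star A * (A * B) * star B := this
      _ = P * Q := by simp only [hP, hQ]; noncomm_ring
  have hnorm : ‖P * Q‖ ≤ 1 := by
    calc ‖P * Q‖ ≤ ‖P‖ * ‖Q‖ := norm_mul_le _ _
      _ ≤ 1 * 1 := by
          exact mul_le_mul (norm_le_one_of_selfAdjoint_idem P hPsa hPidem)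
            (norm_le_one_of_selfAdjoint_idem Q hQsa hQidem) (norm_nonneg _) zero_le_one
      _ = 1 := one_mul 1
  have hsa : IsSelfAdjoint (P * Q) := isSelfAdjoint_of_idem_contraction _ hidem hnorm
  have : star (P * Q) = P * Q := hsa
  rw [star_mul, hPsa, hQsa] at this
  exact this.symm
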